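/- Let t be odd, m even, n = mt, and let C be an m-cycle in a cyclic m-cycle system of a graph on vertex set Z_n lying in an orbit of odd length k = ℓt. If ℓ(C) contains an odd number of odd edge lengths, then t is odd; dually, if the orbit length k is even then ℓ(C) contains an even number of odd edge lengths. -/

import Mathlib

lemma parity_sum_natAbs {ι : Type*} (s : Finset ι) (d : ι → ℤ) :
    Even (∑ i ∈ s, d i) ↔ Even (∑ i ∈ s, (d i).natAbs) := by
  induction s using Finset.cons_induction with
  | empty => simp
  | cons a s ha ih =>
    simp only [Finset.sum_cons, Int.even_add, Nat.even_add, ih, Int.natAbs_even]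

/-- The parity argument of Lemma 2.2: let `m` be even, `n = mt`, and let `C` be a cycle of
a cyclic cycle system in an orbit of length `k = ℓt`, represented by the signed edge
differences `d` along the subpath of length `ℓ = |ℓ(C)|` starting at `0`, which ends at
`kx` with `gcd(x, n/k) = 1` and whose edge lengths are pairwise distinct. If `ℓ(C)`
contains an odd number of odd edge lengths then `t` is odd; dually, if `k` is even then
`ℓ(C)` contains an even number of odd edge lengths. -/
theorem stmt17 (m t l k n x : ℕ) (d : ℕ → ℤ)
    (hm : Even m) (hn : n = m * t) (hk : k = l * t) (hl : 0 < l) (ht : 0 < t)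
    (hx : Nat.gcd x (n / k) = 1)
    (hend : ∑ i ∈ Finset.range l, d i = (k : ℤ) * (x : ℤ))
    (hdist : ∀ i j, i < j → j < l → (d i).natAbs ≠ (d j).natAbs)
    (hpos : ∀ i, i < l → 0 < (d i).natAbs) :
    (Odd (((Finset.range l).filter (fun i => Odd (d i).natAbs)).card) → Odd t) ∧
    (Even k → Even (((Finset.range l).filter (fun i => Odd (d i).natAbs)).card)) := by
  have key : Even k → Even (((Finset.range l).filter (fun i => Odd (d i).natAbs)).card) := by
    intro hke
    rw [← Finset.even_sum_iff_even_card_odd, ← parity_sum_natAbs, hend]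
    exact (Int.even_coe_nat k).mpr hke |>.mul_right _
  refine ⟨fun hodd => ?_, key⟩
  rw [← Nat.not_even_iff_odd]
  intro hte
  exact (Nat.not_even_iff_odd.mpr hodd) (key (hk ▸ hte.mul_left l))
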